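/- For every x ∈ 𝔤 and every λ ∈ W*, the commutator of operators [f_x, D_λ] equals D_{x·λ}, where D_λ := Σ_α λ(e_α) D_α and the dual action of 𝔤 on W* is given by (x·λ)(w) = −λ(x·w). -/

import Mathlib

open scoped Classical

section

attribute [local instance 100] LieRing.ofAssociativeRing

lemma pderiv_pderiv_comm {K I : Type*} [CommSemiring K] (i j : I) (p : MvPolynomial I K) :
    MvPolynomial.pderiv i (MvPolynomial.pderiv j p) =
      MvPolynomial.pderiv j (MvPolynomial.pderiv i p) := by
  induction p using MvPolynomial.induction_on' with
  | add p q hp hq => simp [hp, hq]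
  | monomial s a =>
    rcases eq_or_ne i j with rfl | h
    · rfl
    · simp only [MvPolynomial.pderiv_monomial]
      rw [tsub_right_comm]
      congr 1
      rw [Finsupp.tsub_apply, Finsupp.tsub_apply, Finsupp.single_apply,
        Finsupp.single_apply, if_neg h, if_neg (Ne.symm h)]
      simp only [tsub_zero]
      ring

lemma pderiv_X_mul {K I : Type*} [CommSemiring K] (β γ : I) (p : MvPolynomial I K) :
    MvPolynomial.pderiv β (MvPolynomial.X γ * p) =
      (if β = γ then p else 0) + MvPolynomial.X γ * MvPolynomial.pderiv β p := by
  rw [MvPolynomial.pderiv_mul]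
  rcases eq_or_ne β γ with rfl | h
  · simp
  · simp [MvPolynomial.pderiv_X_of_ne (Ne.symm h), h]

lemma my_sum_lie {L : Type*} [LieRing L] {ι : Type*} (s : Finset ι) (f : ι → L) (y : L) :
    ⁅∑ i ∈ s, f i, y⁆ = ∑ i ∈ s, ⁅f i, y⁆ := by
  induction s using Finset.cons_induction with
  | empty => simp
  | cons a s ha ih => rw [Finset.sum_cons, Finset.sum_cons, add_lie, ih]

lemma my_lie_sum {L : Type*} [LieRing L] {ι : Type*} (s : Finset ι) (f : ι → L) (y : L) :
    ⁅y, ∑ i ∈ s, f i⁆ = ∑ i ∈ s, ⁅y, f i⁆ := by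
  induction s using Finset.cons_induction with
  | empty => simp
  | cons a s ha ih => rw [Finset.sum_cons, Finset.sum_cons, lie_add, ih]

lemma my_smul_lie {K M : Type*} [CommRing K] [AddCommGroup M] [Module K M]
    (c : K) (f g : Module.End K M) :
    ⁅c • f, g⁆ = c • ⁅f, g⁆ := by
  simp [Ring.lie_def, smul_sub, smul_mul_assoc, mul_smul_comm]

lemma my_lie_smul {K M : Type*} [CommRing K] [AddCommGroup M] [Module K M]
    (c : K) (f g : Module.End K M) :
    ⁅f, c • g⁆ = c • ⁅f, g⁆ := by
  simp [Ring.lie_def, smul_sub, smul_mul_assoc, mul_smul_comm]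

/-- Multiplication by the variable `X γ` on the bosonic Fock space `K[X_α : α ∈ I]`. -/
noncomputable def Mop (K : Type*) [CommSemiring K] {I : Type*} (γ : I) :
    Module.End K (MvPolynomial I K) :=
  LinearMap.mulLeft K (MvPolynomial.X γ)

/-- The partial derivative `∂/∂X_α` on the bosonic Fock space `K[X_α : α ∈ I]`. -/
noncomputable def Dop (K : Type*) [CommSemiring K] {I : Type*} (α : I) :
    Module.End K (MvPolynomial I K) :=
  (MvPolynomial.pderiv α).toLinearMap

/-- The normally ordered quadratic piece `N(γ,α)`. -/
noncomputable def Nop (K : Type*) [CommSemiring K] {I : Type*} (J : Set I) (γ α : I) :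
    Module.End K (MvPolynomial I K) :=
  if γ = α ∧ α ∈ J then Dop K α ∘ₗ Mop K α else Mop K γ ∘ₗ Dop K α

lemma lie_Nop_Dop {K I : Type*} [CommRing K] (J : Set I) (γ α β : I) :
    ⁅Nop K J γ α, Dop K β⁆ = if β = γ then -(Dop K α) else 0 := by
  have key : ⁅Mop K γ ∘ₗ Dop K α, Dop K β⁆ = if β = γ then -(Dop K α) else (0 : Module.End K _) := by
    apply LinearMap.ext; intro p
    simp only [Ring.lie_def, LinearMap.sub_apply, Module.End.mul_apply, LinearMap.comp_apply,
      Mop, Dop, LinearMap.mulLeft_apply, Derivation.coeFn_coe]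
    rw [pderiv_X_mul, pderiv_pderiv_comm]
    rcases eq_or_ne β γ with rfl | h
    · simp
    · simp [h]
  by_cases h : γ = α ∧ α ∈ J
  · obtain ⟨rfl, hJ⟩ := h
    rw [Nop, if_pos ⟨rfl, hJ⟩]
    have hDM : Dop K γ ∘ₗ Mop K γ = Mop K γ ∘ₗ Dop K γ + 1 := by
      apply LinearMap.ext; intro p
      simp only [LinearMap.comp_apply, LinearMap.add_apply, Module.End.one_apply, Mop, Dop,
        LinearMap.mulLeft_apply, Derivation.coeFn_coe]
      rw [pderiv_X_mul]
      simp [add_comm]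
    rw [hDM, add_lie, key]
    simp [Ring.lie_def]
  · rw [Nop, if_neg h]
    exact key

end

/-- The normally ordered quadratic operator
`f_x = Σ_{α,γ∈I} x_γ^α N(γ,α)` on bosonic Fock space, where
`x_γ^α = (b.repr ⁅x, b α⁆) γ` are the matrix coefficients of `x` on `W`. -/
noncomputable def fock {K : Type*} [Field K] {L : Type*} [LieRing L] [LieAlgebra K L]
    {W : Type*} [AddCommGroup W] [Module K W] [LieRingModule L W] [LieModule K L W]
    {I : Type*} [Fintype I] (b : Module.Basis I K W) (J : Set I) (x : L) :
    Module.End K (MvPolynomial I K) :=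
  ∑ α : I, ∑ γ : I, b.repr ⁅x, b α⁆ γ • Nop K J γ α

/-- for every `x ∈ 𝔤` and `λ ∈ W*`, the commutator of operators
`[f_x, D_λ]` equals `D_{x·λ}`, where `D_λ = Σ_α λ(e_α) D_α` and the dual action is
`(x·λ)(w) = −λ(x·w)`, i.e. `x·λ = −(λ ∘ toEnd x)`. -/
theorem stmt4 (K : Type*) [Field K] [CharZero K]
    (L : Type*) [LieRing L] [LieAlgebra K L]
    (W : Type*) [AddCommGroup W] [Module K W] [LieRingModule L W] [LieModule K L W]
    (I : Type*) [Fintype I] (b : Module.Basis I K W) (J : Set I)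
    (x : L) (lam : Module.Dual K W) :
    ⁅fock b J x, ∑ α : I, lam (b α) • Dop K α⁆
      = ∑ α : I, (-(lam ∘ₗ (LieModule.toEnd K L W x : W →ₗ[K] W))) (b α) • Dop K α := by
  classical
  letI : LieRing (Module.End K (MvPolynomial I K)) := LieRing.ofAssociativeRing
  have step1 : ⁅fock b J x, ∑ α : I, lam (b α) • Dop K α⁆
      = ∑ a : I, ∑ g : I, ∑ β : I,
          (b.repr ⁅x, b a⁆ g * lam (b β)) • ⁅Nop K J g a, Dop K β⁆ := by
    rw [fock, my_sum_lie]
    refine Finset.sum_congr rfl fun a _ => ?_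
    rw [my_sum_lie]
    refine Finset.sum_congr rfl fun g _ => ?_
    rw [my_smul_lie, my_lie_sum, Finset.smul_sum]
    refine Finset.sum_congr rfl fun β _ => ?_
    rw [my_lie_smul, smul_smul]
  rw [step1]
  refine Finset.sum_congr rfl fun α _ => ?_
  have step2 : ∀ g : I, ∑ β : I, (b.repr ⁅x, b α⁆ g * lam (b β)) • ⁅Nop K J g α, Dop K β⁆
      = (b.repr ⁅x, b α⁆ g * lam (b g)) • (-(Dop K α)) := by
    intro g
    have : ∀ β : I, (b.repr ⁅x, b α⁆ g * lam (b β)) • ⁅Nop K J g α, Dop K β⁆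
        = if β = g then (b.repr ⁅x, b α⁆ g * lam (b β)) • (-(Dop K α)) else 0 := by
      intro β
      rw [lie_Nop_Dop]
      split_ifs <;> simp
    simp only [this]
    simp [Finset.sum_ite_eq']
  simp only [step2]
  have hx : (⁅x, b α⁆ : W) = ∑ γ : I, b.repr ⁅x, b α⁆ γ • b γ :=
    (b.sum_repr ⁅x, b α⁆).symm
  have hl : (-(lam ∘ₗ (LieModule.toEnd K L W x : W →ₗ[K] W))) (b α)
      = -∑ γ : I, b.repr ⁅x, b α⁆ γ * lam (b γ) := by
    simp only [LinearMap.neg_apply, LinearMap.comp_apply, LieModule.toEnd_apply_apply]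
    rw [hx, map_sum]
    simp [smul_eq_mul]
  rw [hl]
  simp only [smul_neg, neg_smul, ← Finset.sum_neg_distrib, Finset.sum_smul]
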